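/- Let M be a commutative monoid and m ∈ M such that for every x ∈ M there exist y ∈ M and g ∈ ℕ with x + y = g·m (i.e. every element is a 'summand' of a multiple of m). Then the localization of M at the submonoid {n·m : n ∈ ℕ} is a group, and consequently this localization is canonically isomorphic to the Grothendieck group completion of M. -/

import Mathlib

/-- If every element of a commutative monoid `M` is a summand of a multiple of `m`, then
the localization of `M` at the submonoid of multiples of `m` is a group, and is hence
canonically isomorphic to the Grothendieck group completion of `M` (the localization at
the full submonoid), compatibly with the canonical maps from `M`. -/
theorem stmt15 {M : Type} [AddCommMonoid M] (m : M)
    (h : ∀ x : M, ∃ (y : M) (g : ℕ), x + y = g • m) :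
    (∀ z : AddLocalization (AddSubmonoid.multiples m), ∃ w, z + w = 0) ∧
    ∃ e : AddLocalization (AddSubmonoid.multiples m) ≃+
        AddLocalization (⊤ : AddSubmonoid M),
      ∀ x : M, e (AddLocalization.mk x 0) = AddLocalization.mk x 0 := by
  have key : ∀ z : AddLocalization (AddSubmonoid.multiples m), ∃ w, z + w = 0 := by
    intro z
    induction z using AddLocalization.ind with
    | _ p =>
      obtain ⟨x, s⟩ := p
      obtain ⟨y, g, hy⟩ := h x
      refine ⟨AddLocalization.mk (y + s) ⟨g • m, g, rfl⟩, ?_⟩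
      rw [AddLocalization.mk_add]
      have : x + (y + ↑s) =
          ↑(s + (⟨g • m, g, rfl⟩ : AddSubmonoid.multiples m)) := by
        push_cast
        rw [← add_assoc, hy, add_comm]
      rw [this, AddLocalization.mk_self]
  refine ⟨key, ?_⟩
  set f := AddLocalization.addMonoidOf (AddSubmonoid.multiples m)
  have hu : ∀ y : (⊤ : AddSubmonoid M), IsAddUnit (f y) := by
    intro y
    obtain ⟨w, hw⟩ := key (f y)
    exact IsAddUnit.of_add_eq_zero _ hw
  set k : AddSubmonoid.LocalizationMap (⊤ : AddSubmonoid M)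
      (AddLocalization (AddSubmonoid.multiples m)) :=
    f.toAddMonoidHom.toLocalizationMap hu
      (by
        intro z
        obtain ⟨⟨x, s⟩, hs⟩ := f.surj z
        exact ⟨(x, ⟨s, trivial⟩), hs⟩)
      (by
        intro x y hxy
        obtain ⟨c, hc⟩ := f.exists_of_eq hxy
        exact ⟨⟨c, trivial⟩, hc⟩) with hk
  refine ⟨k.addEquivOfLocalizations (AddLocalization.addMonoidOf ⊤), fun x => ?_⟩
  have h1 : AddLocalization.mk x (0 : AddSubmonoid.multiples m) = k x := rfl
  have h2 : AddLocalization.mk x (0 : (⊤ : AddSubmonoid M)) =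
      (AddLocalization.addMonoidOf (⊤ : AddSubmonoid M)) x := rfl
  rw [h1, h2, AddSubmonoid.LocalizationMap.addEquivOfLocalizations_apply,
    AddSubmonoid.LocalizationMap.lift_eq, AddSubmonoid.LocalizationMap.toAddMonoidHom_apply]
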